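/- Let q be a prime element of the ring of integers O_K of a number field K, let k, d ≥ 1 with gcd(d,k) = 1, choose positive integers a, b with bk − ad = 1, and let f, g ∈ O_K[x] be monic of degrees k, d with all non-leading coefficients divisible by q^{da+1}. Let m, n be positive integers and set h(0,t) = g(q^a t^m)·t^{kn} − Σ_{i=0}^{k} (f^{(i)}(0)/i!)·q^{ib}·t^{n(k−i)} ∈ O_K[t]. Then q^{da} divides every coefficient of h(0,t), and h(0,t)/q^{da} is a polynomial with constant term a unit times q, leading coefficient a unit, and all middle coefficients divisible by q; hence h(0,t) is irreducible over K (after reversing coefficients it is Eisenstein at q). -/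

import Mathlib

open Polynomial NumberField

theorem stmt_18 (K : Type) [Field K] [NumberField K]
    (q : 𝓞 K) (hq : Prime q)
    (k d : ℕ) (hk : 1 ≤ k) (hd : 1 ≤ d) (hcop : Nat.gcd d k = 1)
    (a b : ℕ) (ha : 0 < a) (hb : 0 < b) (hBez : b * k = a * d + 1)
    (f g : Polynomial (𝓞 K)) (hfm : f.Monic) (hgm : g.Monic)
    (hfdeg : f.natDegree = k) (hgdeg : g.natDegree = d)
    (hfcoeff : ∀ i < k, q ^ (d * a + 1) ∣ f.coeff i)
    (hgcoeff : ∀ i < d, q ^ (d * a + 1) ∣ g.coeff i)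
    (m n : ℕ) (hm : 0 < m) (hn : 0 < n) :
    let h0 : Polynomial (𝓞 K) :=
      g.comp (C (q ^ a) * X ^ m) * X ^ (k * n) -
        ∑ i ∈ Finset.range (k + 1), C (f.coeff i * q ^ (i * b)) * X ^ (n * (k - i))
    (∀ j, q ^ (d * a) ∣ h0.coeff j) ∧
      (∃ h1 : Polynomial (𝓞 K),
        h0 = C (q ^ (d * a)) * h1 ∧
        (∃ u : (𝓞 K)ˣ, h1.coeff 0 = u * q) ∧
        IsUnit h1.leadingCoeff ∧
        (∀ j, 0 < j → j < h1.natDegree → q ∣ h1.coeff j)) ∧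
      Irreducible (h0.map (algebraMap (𝓞 K) K)) := by
  intro h0
  have hq0 : q ≠ 0 := hq.ne_zero
  classical
  -- coefficients of h1
  set c : ℕ → 𝓞 K := fun j =>
    if hj : j < d then q * q ^ (a * j) * (hgcoeff j hj).choose else 1 with hc_def
  set e : ℕ → 𝓞 K := fun i =>
    if hi : i < k then q * q ^ (i * b) * (hfcoeff i hi).choose else q with he_def
  have hcd : c d = 1 := by simp [hc_def]
  have hek : e k = q := by simp [he_def]
  have hc2 : ∀ j < d, q ∣ c j := by
    intro j hj
    simp only [hc_def, dif_pos hj]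
    exact ⟨q ^ (a * j) * (hgcoeff j hj).choose, by ring⟩
  have he2 : ∀ i < k, q ∣ e i := by
    intro i hi
    simp only [he_def, dif_pos hi]
    exact ⟨q ^ (i * b) * (hfcoeff i hi).choose, by ring⟩
  have hc1 : ∀ j ∈ Finset.range (d + 1), g.coeff j * q ^ (a * j) = q ^ (d * a) * c j := by
    intro j hj
    rcases lt_or_eq_of_le (Nat.lt_succ_iff.mp (Finset.mem_range.mp hj)) with hjd | hjd
    · have hspec := (hgcoeff j hjd).choose_spec
      simp only [hc_def, dif_pos hjd]
      conv_lhs => rw [hspec]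
      ring
    · subst hjd
      have hg1 : g.coeff j = 1 := by
        have := hgm.coeff_natDegree
        rwa [hgdeg] at this
      rw [hcd, hg1, one_mul, mul_one, mul_comm a j]
  have he1 : ∀ i ∈ Finset.range (k + 1), f.coeff i * q ^ (i * b) = q ^ (d * a) * e i := by
    intro i hi
    rcases lt_or_eq_of_le (Nat.lt_succ_iff.mp (Finset.mem_range.mp hi)) with hik | hik
    · have hspec := (hfcoeff i hik).choose_spec
      simp only [he_def, dif_pos hik]
      conv_lhs => rw [hspec]
      ring
    · subst hik
      have hf1 : f.coeff i = 1 := by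
        have := hfm.coeff_natDegree
        rwa [hfdeg] at this
      rw [hek, hf1, one_mul, mul_comm i b, hBez, mul_comm a d, pow_succ]
  set h1 : Polynomial (𝓞 K) :=
    (∑ j ∈ Finset.range (d + 1), C (c j) * X ^ (m * j + k * n)) -
      ∑ i ∈ Finset.range (k + 1), C (e i) * X ^ (n * (k - i)) with hh1_def
  -- h0 = C (q ^ (d*a)) * h1
  have hcomp : g.comp (C (q ^ a) * X ^ m) * X ^ (k * n) =
      ∑ j ∈ Finset.range (d + 1), C (g.coeff j * q ^ (a * j)) * X ^ (m * j + k * n) := by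
    rw [Polynomial.comp, Polynomial.eval₂_eq_sum_range, hgdeg, Finset.sum_mul]
    refine Finset.sum_congr rfl fun j hj => ?_
    rw [mul_pow, ← C_pow, ← pow_mul, C_mul, pow_add]
    ring
  have h0eq : h0 = C (q ^ (d * a)) * h1 := by
    show g.comp (C (q ^ a) * X ^ m) * X ^ (k * n) -
        ∑ i ∈ Finset.range (k + 1), C (f.coeff i * q ^ (i * b)) * X ^ (n * (k - i)) =
      C (q ^ (d * a)) * h1
    rw [hcomp, hh1_def, mul_sub, Finset.mul_sum, Finset.mul_sum]
    refine congrArg₂ (· - ·) ?_ ?_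
    · refine Finset.sum_congr rfl fun j hj => ?_
      rw [← mul_assoc, ← C_mul, hc1 j hj]
    · refine Finset.sum_congr rfl fun i hi => ?_
      rw [← mul_assoc, ← C_mul, he1 i hi]
  -- coefficients of h1
  have hcoeff : ∀ t, h1.coeff t =
      (∑ j ∈ Finset.range (d + 1), if t = m * j + k * n then c j else 0) -
        ∑ i ∈ Finset.range (k + 1), if t = n * (k - i) then e i else 0 := by
    intro t
    rw [hh1_def, Polynomial.coeff_sub, Polynomial.finset_sum_coeff,
      Polynomial.finset_sum_coeff]
    congr 1 <;> refine Finset.sum_congr rfl fun j hj => ?_ <;>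
      rw [Polynomial.coeff_C_mul, Polynomial.coeff_X_pow, mul_ite, mul_one, mul_zero]
  have hkn : 0 < k * n := Nat.mul_pos hk hn
  have hmd : 0 < m * d := Nat.mul_pos hm hd
  -- coeff 0
  have hcoeff0 : h1.coeff 0 = -q := by
    rw [hcoeff 0]
    have h1' : (∑ j ∈ Finset.range (d + 1), if 0 = m * j + k * n then c j else 0) = 0 := by
      refine Finset.sum_eq_zero fun j hj => ?_
      rw [if_neg]; omega
    have h2' : (∑ i ∈ Finset.range (k + 1), if 0 = n * (k - i) then e i else 0) = q := by
      rw [Finset.sum_eq_single_of_mem k (Finset.self_mem_range_succ k)]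
      · simp [hek]
      · intro i hi hik
        rw [if_neg]
        have := Finset.mem_range.mp hi
        have : i < k := by omega
        have : 0 < k - i := by omega
        have := Nat.mul_pos hn this
        omega
    rw [h1', h2', zero_sub]
  -- top coefficient
  have hcoefftop : h1.coeff (m * d + k * n) = 1 := by
    rw [hcoeff]
    have h1' : (∑ j ∈ Finset.range (d + 1), if m * d + k * n = m * j + k * n then c j else 0)
        = 1 := by
      rw [Finset.sum_eq_single_of_mem d (Finset.self_mem_range_succ d)]
      · simp [hcd]
      · intro j hj hjd
        rw [if_neg]
        have hj' : j ≤ d := by have := Finset.mem_range.mp hj; omega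
        intro heq
        have : m * d = m * j := by omega
        have : d = j := Nat.eq_of_mul_eq_mul_left hm this
        omega
    have h2' : (∑ i ∈ Finset.range (k + 1), if m * d + k * n = n * (k - i) then e i else 0)
        = 0 := by
      refine Finset.sum_eq_zero fun i hi => ?_
      rw [if_neg]
      have h3 : n * (k - i) ≤ n * k := Nat.mul_le_mul_left n (Nat.sub_le k i)
      have h4 : n * k = k * n := Nat.mul_comm n k
      omega
    rw [h1', h2', sub_zero]
  have hdegle : h1.natDegree ≤ m * d + k * n := by
    rw [hh1_def]
    refine le_trans (Polynomial.natDegree_sub_le _ _) (max_le ?_ ?_)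
    · refine Polynomial.natDegree_sum_le_of_forall_le _ _ fun j hj => ?_
      refine le_trans (Polynomial.natDegree_C_mul_le _ _) ?_
      rw [Polynomial.natDegree_X_pow]
      have : j ≤ d := by simpa [Nat.lt_succ_iff] using hj
      have : m * j ≤ m * d := Nat.mul_le_mul_left m this
      omega
    · refine Polynomial.natDegree_sum_le_of_forall_le _ _ fun i hi => ?_
      refine le_trans (Polynomial.natDegree_C_mul_le _ _) ?_
      rw [Polynomial.natDegree_X_pow]
      have h3 : n * (k - i) ≤ n * k := Nat.mul_le_mul_left n (Nat.sub_le k i)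
      have h4 : n * k = k * n := Nat.mul_comm n k
      omega
  have hdeg : h1.natDegree = m * d + k * n := by
    refine le_antisymm hdegle (Polynomial.le_natDegree_of_ne_zero ?_)
    rw [hcoefftop]; exact one_ne_zero
  have hmon : h1.Monic := by
    unfold Polynomial.Monic Polynomial.leadingCoeff
    rw [hdeg, hcoefftop]
  -- middle coefficients
  have hmid : ∀ t, 0 < t → t < h1.natDegree → q ∣ h1.coeff t := by
    intro t ht htd
    rw [hdeg] at htd
    rw [hcoeff]
    refine dvd_sub (Finset.dvd_sum fun j hj => ?_) (Finset.dvd_sum fun i hi => ?_)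
    · split_ifs with heq
      · have hjd : j < d := by
          rcases Nat.lt_succ_iff_lt_or_eq.mp (Finset.mem_range.mp hj) with h | h
          · exact h
          · subst h; omega
        exact hc2 j hjd
      · exact dvd_zero q
    · split_ifs with heq
      · have hik : i < k := by
          rcases Nat.lt_succ_iff_lt_or_eq.mp (Finset.mem_range.mp hi) with h | h
          · exact h
          · subst h; simp at heq; omega
        exact he2 i hik
      · exact dvd_zero q
  -- Eisenstein: h1 is irreducible over 𝓞 K
  have hsp : Ideal.IsPrime (Ideal.span {q} : Ideal (𝓞 K)) :=
    (Ideal.span_singleton_prime hq0).mpr hq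
  have h1irr : Irreducible h1 := by
    refine irreducible_of_eisenstein_criterion hsp ?_ ?_ ?_ ?_ hmon.isPrimitive
    · rw [hmon.leadingCoeff, Ideal.mem_span_singleton]
      intro hdvd
      exact hq.not_unit (isUnit_of_dvd_one hdvd)
    · intro t ht
      have ht' : t < h1.natDegree := by
        rw [Polynomial.degree_eq_natDegree hmon.ne_zero, Nat.cast_lt] at ht
        exact ht
      rw [Ideal.mem_span_singleton]
      rcases Nat.eq_zero_or_pos t with rfl | htpos
      · rw [hcoeff0]; exact dvd_neg.mpr dvd_rfl
      · exact hmid t htpos ht'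
    · rw [Polynomial.degree_eq_natDegree hmon.ne_zero, hdeg]
      exact_mod_cast Nat.add_pos_left hmd _
    · rw [hcoeff0, Ideal.span_singleton_pow, Ideal.mem_span_singleton, dvd_neg, pow_two]
      intro hdvd
      have := (mul_dvd_mul_iff_left hq0).mp (by simpa using hdvd : q * q ∣ q * 1)
      exact hq.not_unit (isUnit_of_dvd_one this)
  have h1mapirr : Irreducible (h1.map (algebraMap (𝓞 K) K)) :=
    (hmon.irreducible_iff_irreducible_map_fraction_map).mp h1irr
  have hunit : IsUnit (C (algebraMap (𝓞 K) K (q ^ (d * a)))) := by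
    rw [Polynomial.isUnit_C, isUnit_iff_ne_zero]
    exact (map_ne_zero_iff _ (IsFractionRing.injective (𝓞 K) K)).mpr (pow_ne_zero _ hq0)
  refine ⟨fun j => ⟨h1.coeff j, by rw [h0eq, Polynomial.coeff_C_mul]⟩,
    ⟨h1, h0eq, ⟨-1, by rw [hcoeff0]; simp⟩, hmon.leadingCoeff ▸ isUnit_one, hmid⟩, ?_⟩
  rw [h0eq, Polynomial.map_mul, Polynomial.map_C]
  exact (Associated.irreducible ⟨hunit.unit, by rw [IsUnit.unit_spec, mul_comm]⟩ h1mapirr)
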